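/- Let (γ, n₁, n₂) be a non-parabolic spatial hybrid framed curve with curvature (L, M, 0, α), and Inv_γ = γ + f₁n₁ + f₂μ its involute (f₁' = σδ₁δ₂Mf₂, f₂' = -Mf₁ - α). For a fixed point p, the contrapedal curve of (Inv_γ, n₁, μ) relative to p equals the pedal curve of (γ, n₁, n₂) relative to p: CPe_{Inv_γ,p}(t) = p - σδ₁δ₂ g(p - γ(t), n₂(t)) n₂(t) = Pe_{γ,p}(t). -/
import Mathlib

open Real Matrix

noncomputable section

/-- Scalar product on the spatial hybrid number space, coordinates (b,c,d). -/
def g (x y : Fin 3 → ℝ) : ℝ := x 0 * y 0 - x 0 * y 1 - y 0 * x 1 - x 2 * y 2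

/-- Hybridian product of g-orthogonal spatial hybrid numbers. -/
def hprod (x y : Fin 3 → ℝ) : Fin 3 → ℝ :=
  ![x 0 * y 2 - y 0 * x 2, x 0 * y 2 - y 0 * x 2 - x 1 * y 2 + y 1 * x 2,
    y 0 * x 1 - x 0 * y 1]

/-- Gram matrix of g. -/
def Gmat : Matrix (Fin 3) (Fin 3) ℝ := !![1, -1, 0; -1, 0, 0; 0, 0, -1]

/-- The contrapedal curve of the involute (Inv_γ, n₁, μ) relative to p
coincides with the pedal curve of (γ, n₁, n₂) relative to p. -/
theorem stmt14 (γ n₁ n₂ μ : ℝ → Fin 3 → ℝ) (L M α f₁ f₂ : ℝ → ℝ)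
    (σ δ₁ δ₂ : ℝ)
    (hσ : σ = 1 ∨ σ = -1) (hδ₁ : δ₁ = 1 ∨ δ₁ = -1) (hδ₂ : δ₂ = 1 ∨ δ₂ = -1)
    (hμ : ∀ t, μ t = hprod (n₁ t) (n₂ t))
    (hg₁ : ∀ t, g (n₁ t) (n₁ t) = σ) (hg₂ : ∀ t, g (n₂ t) (n₂ t) = σ * δ₁ * δ₂)
    (hg₁₂ : ∀ t, g (n₁ t) (n₂ t) = 0) (hg₂μ : ∀ t, g (μ t) (n₂ t) = 0)
    (hγd : Differentiable ℝ γ) (hn₁d : Differentiable ℝ n₁)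
    (hn₂d : Differentiable ℝ n₂) (hf₁d : Differentiable ℝ f₁)
    (hf₂d : Differentiable ℝ f₂)
    (hF₁ : ∀ t, deriv n₁ t = L t • n₂ t + M t • μ t)
    (hF₂ : ∀ t, deriv n₂ t = (-(δ₁ * δ₂) * L t) • n₁ t)
    (hFμ : ∀ t, deriv μ t = (-(σ * δ₁ * δ₂) * M t) • n₁ t)
    (hγ' : ∀ t, deriv γ t = α t • μ t)
    (hf₁ : ∀ t, deriv f₁ t = σ * δ₁ * δ₂ * M t * f₂ t)
    (hf₂ : ∀ t, deriv f₂ t = -(M t * f₁ t) - α t)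
    (Inv : ℝ → Fin 3 → ℝ)
    (hInv : ∀ t, Inv t = γ t + f₁ t • n₁ t + f₂ t • μ t)
    (p : Fin 3 → ℝ) :
    ∀ t, p - (σ * δ₁ * δ₂ * g (p - Inv t) (n₂ t)) • n₂ t
      = p - (σ * δ₁ * δ₂ * g (p - γ t) (n₂ t)) • n₂ t := by
  intro t
  have key : g (p - Inv t) (n₂ t) = g (p - γ t) (n₂ t) := by
    have h1 := hg₁₂ t
    have h2 := hg₂μ t
    simp only [g, hInv, Pi.add_apply, Pi.sub_apply, Pi.smul_apply, smul_eq_mul] at h1 h2 ⊢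
    linear_combination (-f₁ t) * h1 + (-f₂ t) * h2
  rw [key]
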